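/- Let f: ℝ^{d₁} × ℝ^{d₂} → ℝ be twice continuously differentiable. Assume that for every fixed x, every local maximum of the function f(x,·) is a global maximum of f(x,·), and that f(x,·) is strongly concave in a neighborhood of each of its local maxima (i.e., ∇²_{yy} f(x,y) is negative definite at every local maximum y of f(x,·)). Then every global minimax point of f is also a local minimax point of f. -/

import Mathlib

open Metric Filter Set

noncomputable section

/-- `(xs, ys)` is a local minimax point of `f`. -/
def IsLocalMinimax {d₁ d₂ : ℕ}
    (f : EuclideanSpace ℝ (Fin d₁) → EuclideanSpace ℝ (Fin d₂) → ℝ)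
    (xs : EuclideanSpace ℝ (Fin d₁)) (ys : EuclideanSpace ℝ (Fin d₂)) : Prop :=
  ∃ δ₀ > (0 : ℝ), ∃ h : ℝ → ℝ,
    (∀ δ ∈ Set.Ioc (0 : ℝ) δ₀, 0 ≤ h δ) ∧
    Tendsto h (nhdsWithin 0 (Set.Ioi 0)) (nhds 0) ∧
    ∀ δ ∈ Set.Ioc (0 : ℝ) δ₀, ∀ x y,
      ‖x - xs‖ ≤ δ → ‖y - ys‖ ≤ δ →
        f xs y ≤ f xs ys ∧ f xs ys ≤ sSup (f x '' closedBall ys (h δ))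

theorem strictLocalMaxAux {d : ℕ} (F : EuclideanSpace ℝ (Fin d) → ℝ) (hF : ContDiff ℝ 2 F)
    (ys : EuclideanSpace ℝ (Fin d)) (hmax : ∀ y, F y ≤ F ys)
    (hH : ∀ v : EuclideanSpace ℝ (Fin d), v ≠ 0 →
      fderiv ℝ (fun y' => fderiv ℝ F y') ys v v < 0) :
    ∃ r > 0, ∀ y, y ≠ ys → ‖y - ys‖ ≤ r → F y < F ys := by
  set H := fun z => fderiv ℝ (fderiv ℝ F) z with hHdef
  have hΦ : ContDiff ℝ 1 (fderiv ℝ F) := hF.fderiv_right (by norm_num)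
  have hHcont : Continuous H := hΦ.continuous_fderiv one_ne_zero
  -- eventually, Hessian is negative definite on unit sphere
  have hev : ∀ᶠ z in nhds ys, ∀ v ∈ sphere (0 : EuclideanSpace ℝ (Fin d)) 1,
      H z v v < 0 := by
    apply (isCompact_sphere 0 1).eventually_forall_of_forall_eventually
    intro v hv
    have hvne : v ≠ 0 := by intro h; simp [h] at hv
    have h0 : H ys v v < 0 := hH v hvne
    have hc : Continuous fun p : (EuclideanSpace ℝ (Fin d)) × (EuclideanSpace ℝ (Fin d)) =>
        H p.1 p.2 p.2 :=
      ((hHcont.comp continuous_fst).clm_apply continuous_snd).clm_apply continuous_snd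
    have : IsOpen {p : (EuclideanSpace ℝ (Fin d)) × (EuclideanSpace ℝ (Fin d)) |
        H p.1 p.2 p.2 < 0} := isOpen_lt hc continuous_const
    exact this.eventually_mem (by simpa using h0)
  rw [Metric.eventually_nhds_iff] at hev
  obtain ⟨ρ, hρ, hball⟩ := hev
  -- Hessian negative definite on ball, for all nonzero v
  have hneg : ∀ z, dist z ys < ρ → ∀ v : EuclideanSpace ℝ (Fin d), v ≠ 0 → H z v v < 0 := by
    intro z hz v hv
    set u := ‖v‖⁻¹ • v with hu
    have hvn : ‖v‖ ≠ 0 := norm_ne_zero_iff.mpr hv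
    have huu : u ∈ sphere (0 : EuclideanSpace ℝ (Fin d)) 1 := by
      simp [hu, norm_smul, abs_of_nonneg (inv_nonneg.mpr (norm_nonneg v)), inv_mul_cancel₀ hvn]
    have h1 : H z u u < 0 := hball hz u huu
    have hveq : v = ‖v‖ • u := by
      rw [hu, smul_smul, mul_inv_cancel₀ hvn, one_smul]
    have hun : ‖u‖ = 1 := by simpa using huu
    calc H z v v = ‖v‖^2 * (H z u u) := by
          rw [hveq]; simp [map_smul, smul_smul, norm_smul, hun]; ring
      _ < 0 := mul_neg_of_pos_of_neg (by positivity) h1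
  refine ⟨ρ/2, by positivity, ?_⟩
  intro y hy hyr
  set v := y - ys with hv
  have hvne : v ≠ 0 := sub_ne_zero.mpr hy
  set γ : ℝ → EuclideanSpace ℝ (Fin d) := fun t => ys + t • v with hγ
  have hγball : ∀ t ∈ Set.Icc (0:ℝ) 1, dist (γ t) ys < ρ := by
    intro t ht
    have : dist (γ t) ys = |t| * ‖v‖ := by
      rw [dist_eq_norm]; simp [hγ, norm_smul]
    rw [this]
    have : |t| * ‖v‖ ≤ 1 * (ρ/2) := by
      apply mul_le_mul (abs_le.mpr ⟨by linarith [ht.1], ht.2⟩) hyr (norm_nonneg v) zero_le_one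
    linarith
  have hγd : ∀ t : ℝ, HasDerivAt γ v t := by
    intro t
    simpa [hγ] using ((hasDerivAt_id t).smul_const v).const_add ys
  set g : ℝ → ℝ := fun t => F (γ t) with hg
  have hgd : ∀ t : ℝ, HasDerivAt g (fderiv ℝ F (γ t) v) t := by
    intro t
    exact ((hF.differentiable (by norm_num)).differentiableAt.hasFDerivAt).comp_hasDerivAt t (hγd t)
  set g1 : ℝ → ℝ := fun t => fderiv ℝ F (γ t) v with hg1
  have hg1d : ∀ t : ℝ, HasDerivAt g1 (H (γ t) v v) t := by
    intro t
    have h1 : HasFDerivAt (fderiv ℝ F) (H (γ t)) (γ t) :=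
      ((hΦ.differentiable one_ne_zero).differentiableAt).hasFDerivAt
    have h2 : HasDerivAt (fun t => fderiv ℝ F (γ t)) (H (γ t) v) t :=
      h1.comp_hasDerivAt t (hγd t)
    have h3 := ((ContinuousLinearMap.apply ℝ ℝ v).hasFDerivAt.comp_hasDerivAt t h2)
    exact h3
  -- fderiv F ys = 0
  have hlm : IsLocalMax F ys := Filter.Eventually.of_forall (fun y => hmax y)
  have hcrit : fderiv ℝ F ys = 0 := hlm.fderiv_eq_zero
  have hg1zero : g1 0 = 0 := by simp [hg1, hγ, hcrit]
  -- g1 strictly decreasing on Icc 0 1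
  have hg1anti : StrictAntiOn g1 (Set.Icc 0 1) := by
    apply strictAntiOn_of_deriv_neg (convex_Icc 0 1)
      (fun t _ => (hg1d t).continuousAt.continuousWithinAt)
    intro t ht
    rw [interior_Icc] at ht
    rw [(hg1d t).deriv]
    exact hneg _ (hγball t ⟨le_of_lt ht.1, le_of_lt ht.2⟩) v hvne
  have hg1neg : ∀ t ∈ Set.Ioo (0:ℝ) 1, g1 t < 0 := by
    intro t ht
    have := hg1anti (Set.mem_Icc.mpr ⟨le_refl 0, zero_le_one⟩)
      (Set.mem_Icc.mpr ⟨le_of_lt ht.1, le_of_lt ht.2⟩) ht.1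
    rwa [hg1zero] at this
  have hganti : StrictAntiOn g (Set.Icc 0 1) := by
    apply strictAntiOn_of_deriv_neg (convex_Icc 0 1)
      (fun t _ => (hgd t).continuousAt.continuousWithinAt)
    intro t ht
    rw [interior_Icc] at ht
    rw [(hgd t).deriv]
    exact hg1neg t ht
  have := hganti (Set.mem_Icc.mpr ⟨le_refl 0, zero_le_one⟩)
    (Set.mem_Icc.mpr ⟨zero_le_one, le_refl 1⟩) zero_lt_one
  simpa [hg, hγ, hv] using this


/-- If `f` is twice continuously differentiable, every local maximum of
`f x ·` is a global maximum of `f x ·` for every `x`, and `f x ·` is strongly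
concave near each of its local maxima (`∇²_{yy} f` is negative definite at
local maxima of `f x ·`), then every global minimax point of `f` is a local
minimax point.  The hypothesis `hgmin` expresses
`f xs ys ≤ max_{y'} f x y'` (for every `x`) in a sup-free way. -/
theorem stmt_12 {d₁ d₂ : ℕ}
    (f : EuclideanSpace ℝ (Fin d₁) → EuclideanSpace ℝ (Fin d₂) → ℝ)
    (hf : ContDiff ℝ 2
      (fun p : EuclideanSpace ℝ (Fin d₁) × EuclideanSpace ℝ (Fin d₂) => f p.1 p.2))
    (hloc_glob : ∀ x y, IsLocalMax (f x) y → ∀ y', f x y' ≤ f x y)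
    (hconc : ∀ x y, IsLocalMax (f x) y →
      ∀ v : EuclideanSpace ℝ (Fin d₂), v ≠ 0 →
        fderiv ℝ (fun y' => fderiv ℝ (f x) y') y v v < 0)
    (xs : EuclideanSpace ℝ (Fin d₁)) (ys : EuclideanSpace ℝ (Fin d₂))
    (hgmax : ∀ y, f xs y ≤ f xs ys)
    (hgmin : ∀ x (c : ℝ), (∀ y, f x y ≤ c) → f xs ys ≤ c) :
    IsLocalMinimax f xs ys := by
  have hfc : Continuous (fun p : EuclideanSpace ℝ (Fin d₁) × EuclideanSpace ℝ (Fin d₂) => f p.1 p.2) := hf.continuous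
  have hfxc : ∀ x, Continuous (f x) := fun x =>
    hfc.comp (Continuous.prodMk_right x)
  -- strict local max of f xs at ys
  have hlmax : IsLocalMax (f xs) ys := Filter.Eventually.of_forall hgmax
  have hFC : ContDiff ℝ 2 (f xs) := by
    have : (f xs) = (fun p : EuclideanSpace ℝ (Fin d₁) × EuclideanSpace ℝ (Fin d₂) => f p.1 p.2) ∘ (fun y => (xs, y)) := rfl
    rw [this]
    exact hf.comp (contDiff_const.prodMk contDiff_id)
  obtain ⟨r, hr, hstrict⟩ := strictLocalMaxAux (f xs) hFC ys hgmax (hconc xs ys hlmax)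
  -- Claim B
  have claimB : ∀ ε : ℝ, 0 < ε → ε ≤ r → ∃ δ > 0, ∀ x, ‖x - xs‖ ≤ δ →
      ∃ y', ‖y' - ys‖ ≤ ε ∧ f xs ys ≤ f x y' := by
    intro ε hε hεr
    have hev : ∀ᶠ x in nhds xs, ∀ y ∈ sphere ys ε, f x y < f x ys := by
      apply (isCompact_sphere ys ε).eventually_forall_of_forall_eventually
      intro y hy
      have hyne : y ≠ ys := by
        intro h
        rw [mem_sphere, h, dist_self] at hy
        exact hε.ne hy
      have hylt : f xs y < f xs ys := by
        apply hstrict y hyne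
        rw [mem_sphere] at hy
        rw [← dist_eq_norm, hy]; exact hεr
      have hc : Continuous fun p : (EuclideanSpace ℝ (Fin d₁)) × (EuclideanSpace ℝ (Fin d₂)) =>
          (f p.1 p.2, f p.1 ys) :=
        hfc.prodMk (hfc.comp (continuous_fst.prodMk continuous_const))
      have hopen : IsOpen {p : (EuclideanSpace ℝ (Fin d₁)) × (EuclideanSpace ℝ (Fin d₂)) |
          f p.1 p.2 < f p.1 ys} :=
        isOpen_lt (hfc) (hfc.comp (continuous_fst.prodMk continuous_const))
      exact hopen.eventually_mem (by simpa using hylt)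
    rw [Metric.eventually_nhds_iff] at hev
    obtain ⟨δ', hδ', hx⟩ := hev
    refine ⟨δ'/2, by positivity, ?_⟩
    intro x hxs
    have hxlt : ∀ y ∈ sphere ys ε, f x y < f x ys := by
      apply hx
      rw [dist_eq_norm]; linarith
    -- max of f x on closed ball
    obtain ⟨y', hy'mem, hy'max⟩ := (isCompact_closedBall ys ε).exists_isMaxOn
      (nonempty_closedBall.mpr hε.le) ((hfxc x).continuousOn)
    have hy'int : dist y' ys < ε := by
      rcases lt_or_eq_of_le (mem_closedBall.mp hy'mem) with h | h
      · exact h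
      · exfalso
        have h1 : f x y' < f x ys := hxlt y' (by rwa [mem_sphere])
        have h2 : f x ys ≤ f x y' := hy'max (mem_closedBall_self hε.le)
        linarith
    have hlm : IsLocalMax (f x) y' := by
      apply hy'max.isLocalMax
      apply mem_of_superset (isOpen_ball.mem_nhds (mem_ball.mpr hy'int)) ball_subset_closedBall
    have hglob : ∀ y'', f x y'' ≤ f x y' := hloc_glob x y' hlm
    exact ⟨y', by rw [← dist_eq_norm]; exact hy'int.le, hgmin x (f x y') hglob⟩
  -- helper: witness in ball implies sSup bound
  have hwit : ∀ (x) (ε : ℝ), 0 ≤ ε → (∃ y', ‖y' - ys‖ ≤ ε ∧ f xs ys ≤ f x y') →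
      f xs ys ≤ sSup (f x '' closedBall ys ε) := by
    rintro x ε hε ⟨y', hy', hfy'⟩
    have hbdd : BddAbove (f x '' closedBall ys ε) :=
      ((isCompact_closedBall ys ε).image (hfxc x)).bddAbove
    exact hfy'.trans (le_csSup hbdd (mem_image_of_mem _ (by rwa [mem_closedBall, dist_eq_norm])))
  -- monotonicity of sSup in the radius
  have hmono : ∀ (x) (ε ε' : ℝ), 0 ≤ ε → ε ≤ ε' →
      sSup (f x '' closedBall ys ε) ≤ sSup (f x '' closedBall ys ε') := by
    intro x ε ε' hε hle
    apply csSup_le_csSup ((isCompact_closedBall ys ε').image (hfxc x)).bddAbove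
      ((nonempty_closedBall.mpr hε).image _)
      (image_mono (closedBall_subset_closedBall hle))
  obtain ⟨δ₀, hδ₀, hδ₀prop⟩ := claimB r hr le_rfl
  set S : ℝ → Set ℝ := fun δ => {ε : ℝ | 0 < ε ∧ ∀ x, ‖x - xs‖ ≤ δ →
    f xs ys ≤ sSup (f x '' closedBall ys ε)} with hS
  have hSup : ∀ δ (ε ε' : ℝ), ε ∈ S δ → ε ≤ ε' → ε' ∈ S δ := by
    intro δ ε ε' hε hle
    exact ⟨lt_of_lt_of_le hε.1 hle, fun x hx => (hε.2 x hx).trans (hmono x ε ε' hε.1.le hle)⟩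
  have hSr : ∀ δ, 0 < δ → δ ≤ δ₀ → r ∈ S δ := by
    intro δ hδ hδle
    refine ⟨hr, fun x hx => hwit x r hr.le (hδ₀prop x (hx.trans hδle))⟩
  have hSnonneg : ∀ δ, ∀ ε ∈ S δ, (0:ℝ) ≤ ε := fun δ ε hε => hε.1.le
  have hSInfnonneg : ∀ δ, 0 ≤ sInf (S δ) := fun δ => Real.sInf_nonneg (hSnonneg δ)
  set h : ℝ → ℝ := fun δ => sInf (S δ) + δ with hh
  have hkey : ∀ δ, 0 < δ → δ ≤ δ₀ → h δ ∈ S δ := by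
    intro δ hδ hδle
    have hne : (S δ).Nonempty := ⟨r, hSr δ hδ hδle⟩
    have hlt : sInf (S δ) < h δ := by simp only [hh]; linarith
    obtain ⟨ε, hεS, hεlt⟩ := exists_lt_of_csInf_lt hne hlt
    exact hSup δ ε (h δ) hεS hεlt.le
  refine ⟨δ₀, hδ₀, h, ?_, ?_, ?_⟩
  · intro δ hδ
    have := hSInfnonneg δ
    simp only [hh]; linarith [hδ.1]
  · rw [Metric.tendsto_nhdsWithin_nhds]
    intro ε hε
    have hε3 : (0:ℝ) < min (ε/3) r := lt_min (by linarith) hr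
    obtain ⟨δ', hδ', hδ'prop⟩ := claimB (min (ε/3) r) hε3 (min_le_right _ _)
    refine ⟨min δ' (ε/3), lt_min hδ' (by linarith), ?_⟩
    intro δ hδmem hdist
    have hδpos : 0 < δ := hδmem
    rw [Real.dist_eq, sub_zero, abs_of_pos hδpos] at hdist
    have hδlt1 : δ < δ' := lt_of_lt_of_le hdist (min_le_left _ _)
    have hδlt2 : δ < ε/3 := lt_of_lt_of_le hdist (min_le_right _ _)
    have hmem : min (ε/3) r ∈ S δ := by
      refine ⟨hε3, fun x hx => hwit x _ hε3.le (hδ'prop x (hx.trans hδlt1.le))⟩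
    have h1 : sInf (S δ) ≤ min (ε/3) r :=
      csInf_le ⟨0, fun y hy => hSnonneg δ y hy⟩ hmem
    have h2 : min (ε/3) r ≤ ε/3 := min_le_left _ _
    rw [Real.dist_eq, sub_zero, abs_of_nonneg (by simp only [hh]; linarith [hSInfnonneg δ])]
    simp only [hh]; linarith
  · intro δ hδ x y hx hy
    exact ⟨hgmax y, (hkey δ hδ.1 hδ.2).2 x hx⟩
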